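/- Let κ be an uncountable regular cardinal. A CW complex X is locally less than κ if and only if each connected component of X contains fewer than κ many cells. -/

import Mathlib

open Set Metric Topology

/-- Eventual domination of functions `ℕ → ℕ`. -/
def EvDom (f g : ℕ → ℕ) : Prop := ∀ᶠ n in Filter.atTop, f n ≤ g n

/-- The bounding number `𝔟`: the least cardinality of a family of functions `ℕ → ℕ`
unbounded with respect to eventual domination. -/
noncomputable def boundingNumber : Cardinal :=
  sInf {c : Cardinal | ∃ F : Set (ℕ → ℕ), Cardinal.mk F = c ∧
    ∀ g : ℕ → ℕ, ∃ f ∈ F, ¬ EvDom f g}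

/-- A cell decomposition of a Hausdorff space: characteristic maps from closed discs,
restricting to homeomorphisms onto their images on the open discs, with the open cells
partitioning the space, satisfying closure-finiteness. -/
structure CellStruct (X : Type) [TopologicalSpace X] where
  ι : Type
  dim : ι → ℕ
  map : (i : ι) → EuclideanSpace ℝ (Fin (dim i)) → X
  continuousOn : ∀ i, ContinuousOn (map i) (closedBall 0 1)
  isEmbedding : ∀ i, IsEmbedding ((ball (0 : EuclideanSpace ℝ (Fin (dim i))) 1).restrict (map i))
  pairwiseDisjoint :
    Pairwise fun i j => Disjoint (map i '' ball 0 1) (map j '' ball 0 1)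
  iUnion_eq : ⋃ i, map i '' ball 0 1 = univ
  closureFinite : ∀ i, ∃ F : Finset ι, (∀ j ∈ F, dim j < dim i) ∧
    map i '' sphere 0 1 ⊆ ⋃ j ∈ F, map j '' ball 0 1

namespace CellStruct

variable {X : Type} [TopologicalSpace X]

/-- The open cell with index `i`. -/
def openCell (C : CellStruct X) (i : C.ι) : Set X := C.map i '' ball 0 1

/-- The closed cell with index `i`. -/
def closedCell (C : CellStruct X) (i : C.ι) : Set X := C.map i '' closedBall 0 1

/-- The image of the boundary sphere of the cell with index `i`. -/
def sphereImage (C : CellStruct X) (i : C.ι) : Set X := C.map i '' sphere 0 1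

/-- The cell structure has the weak topology: a set is closed iff its intersection with
every closed cell is closed. -/
def HasWeakTopology (C : CellStruct X) : Prop :=
  ∀ A : Set X, IsClosed A ↔ ∀ i, IsClosed (A ∩ C.closedCell i)

end CellStruct

/-- A CW structure on a (Hausdorff) space: a cell decomposition with closure-finiteness,
such that the topology is the weak topology determined by the closed cells. -/
structure CWStruct (X : Type) [TopologicalSpace X] extends CellStruct X where
  weakTopology : toCellStruct.HasWeakTopology

namespace CWStruct

variable {X : Type} [TopologicalSpace X]

/-- A subcomplex: a union of open cells containing the closure of each of its cells. -/
def IsSubcomplex (C : CWStruct X) (A : Set X) : Prop :=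
  (∃ J : Set C.ι, A = ⋃ j ∈ J, C.openCell j) ∧
    ∀ i, C.openCell i ⊆ A → C.closedCell i ⊆ A

/-- The set of (indices of) cells of a subcomplex `A`. -/
def cells (C : CWStruct X) (A : Set X) : Set C.ι := {i | C.openCell i ⊆ A}

/-- `X` is locally less than `κ`: every point is in the interior of a subcomplex
with fewer than `κ` many cells. -/
def LocallyLT (C : CWStruct X) (κ : Cardinal) : Prop :=
  ∀ x : X, ∃ A : Set X, C.IsSubcomplex A ∧ Cardinal.mk (C.cells A) < κ ∧ x ∈ interior A

/-- Locally finite: every point is in the interior of a finite subcomplex. -/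
def LocallyFinite (C : CWStruct X) : Prop := C.LocallyLT Cardinal.aleph0

/-- Locally countable: every point is in the interior of a countable subcomplex. -/
def LocallyCountable (C : CWStruct X) : Prop := C.LocallyLT (Cardinal.aleph 1)

end CWStruct

/-- `E` is a CW structure on `X × Y` (with the product topology) whose cells are
exactly the products of cells of `C` and `D`, with the corresponding dimensions.
The existence of such an `E` expresses that the product topology on `X × Y`
makes it a CW complex with the product cell structure. -/
def IsProductCWStruct {X Y : Type} [TopologicalSpace X] [TopologicalSpace Y]
    (C : CWStruct X) (D : CWStruct Y) (E : CWStruct (X × Y)) : Prop :=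
  (∀ k : E.ι, ∃ (a : C.ι) (b : D.ι),
      E.openCell k = C.openCell a ×ˢ D.openCell b ∧ E.dim k = C.dim a + D.dim b) ∧
  (∀ (a : C.ι) (b : D.ι), ∃ k : E.ι, E.openCell k = C.openCell a ×ˢ D.openCell b)

/-- A space is compactly generated: a set is closed whenever its intersection with
every compact subset is closed in the subspace topology. -/
def IsKSpace (X : Type) [TopologicalSpace X] : Prop :=
  ∀ A : Set X, (∀ K : Set X, IsCompact K → IsClosed ((Subtype.val ⁻¹' A : Set K))) → IsClosed A

namespace CWStruct

variable {X : Type} [TopologicalSpace X]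

/-- The collar neighbourhood `C^e_n(U)` inside the closed cell `e`:
the image of `{t • z : t ∈ (n/(n+1), 1], z ∈ Sᵈ, φ_e z ∈ U}` under `φ_e`. -/
noncomputable def collar (C : CWStruct X) (e : C.ι) (n : ℕ) (U : Set X) : Set X :=
  C.map e '' {p | ∃ t ∈ Set.Ioc ((n : ℝ) / (n + 1)) 1,
    ∃ z : EuclideanSpace ℝ (Fin (C.dim e)), ‖z‖ = 1 ∧ C.map e z ∈ U ∧ p = t • z}

/-- The basic neighbourhood `B_n(x)` of `x = φ_{i₀} z` inside its open cell: the image of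
the open ball about `z` of radius `min (1/(n+1)) ((1 - ‖z‖)/2)`. -/
noncomputable def ballNbhd (C : CWStruct X) (i₀ : C.ι)
    (z : EuclideanSpace ℝ (Fin (C.dim i₀))) (n : ℕ) : Set X :=
  C.map i₀ '' Metric.ball z (min (1 / (n + 1)) ((1 - ‖z‖) / 2))

open Classical in
/-- The part of the neighbourhood `U_f(x)` lying in the `n`-skeleton, defined by recursion
on dimension: start with `B_{f i₀}(x)` in dimension `dim i₀` (with the empty set in every
other cell of dimension at most `dim i₀`), and extend through each cell of each higher
dimension by the collar neighbourhoods `C^e_{f e}(·)`. -/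
noncomputable def nbhdSkel (C : CWStruct X) (i₀ : C.ι)
    (z : EuclideanSpace ℝ (Fin (C.dim i₀))) (f : C.ι → ℕ) : ℕ → Set X
  | 0 => if C.dim i₀ = 0 then C.ballNbhd i₀ z (f i₀) else ∅
  | n + 1 =>
      (if C.dim i₀ = n + 1 then C.ballNbhd i₀ z (f i₀) else ∅) ∪
      C.nbhdSkel i₀ z f n ∪
      ⋃ e : C.ι, if C.dim e = n + 1 then C.collar e (f e) (C.nbhdSkel i₀ z f n) else ∅

/-- The open neighbourhood `U_f(x)` of `x = φ_{i₀} z` determined by `f : ι → ℕ`. -/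
noncomputable def nbhd (C : CWStruct X) (i₀ : C.ι)
    (z : EuclideanSpace ℝ (Fin (C.dim i₀))) (f : C.ι → ℕ) : Set X :=
  ⋃ n, C.nbhdSkel i₀ z f n

end CWStruct



section Aux

open CWStruct

namespace CWStruct

set_option linter.unusedSectionVars false

variable {X : Type} [TopologicalSpace X] [T2Space X] (C : CWStruct X)

lemma openCell_nonempty (i : C.ι) : (C.openCell i).Nonempty :=
  (Metric.nonempty_ball.2 one_pos).image _

lemma openCell_subset_closedCell (i : C.ι) : C.openCell i ⊆ C.closedCell i :=
  Set.image_mono Metric.ball_subset_closedBall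

lemma eq_of_mem_openCell {i j : C.ι} {y : X} (hi : y ∈ C.openCell i)
    (hj : y ∈ C.openCell j) : i = j := by
  by_contra h
  exact Set.disjoint_left.1 (C.pairwiseDisjoint h) hi hj

lemma exists_mem_openCell (y : X) : ∃ i, y ∈ C.openCell i := by
  have : y ∈ ⋃ i, C.toCellStruct.map i '' ball 0 1 := by
    rw [C.iUnion_eq]; trivial
  exact Set.mem_iUnion.1 this

lemma isCompact_closedCell (i : C.ι) : IsCompact (C.closedCell i) :=
  (isCompact_closedBall (0 : EuclideanSpace ℝ (Fin (C.dim i))) 1).image_of_continuousOn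
    (C.continuousOn i)

lemma isClosed_closedCell (i : C.ι) : IsClosed (C.closedCell i) :=
  (C.isCompact_closedCell i).isClosed

lemma isPreconnected_closedCell (i : C.ι) : IsPreconnected (C.closedCell i) :=
  ((convex_closedBall (0 : EuclideanSpace ℝ (Fin (C.dim i))) 1).isPreconnected).image _
    (C.continuousOn i)

lemma closedCell_eq (i : C.ι) : C.closedCell i = C.openCell i ∪ C.sphereImage i := by
  show C.toCellStruct.map i '' closedBall 0 1 = _ ∪ _
  rw [← ball_union_sphere, Set.image_union]
  rfl

lemma IsSubcomplex.openCell_subset {A : Set X} (hA : C.IsSubcomplex A) {i : C.ι}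
    (h : (C.openCell i ∩ A).Nonempty) : C.openCell i ⊆ A := by
  obtain ⟨J, hJ⟩ := hA.1
  obtain ⟨y, hyi, hyA⟩ := h
  rw [hJ] at hyA ⊢
  obtain ⟨j, hjJ, hyj⟩ := Set.mem_iUnion₂.1 hyA
  rw [C.eq_of_mem_openCell hyi hyj]
  exact fun z hz => Set.mem_iUnion₂.2 ⟨j, hjJ, hz⟩

lemma IsSubcomplex.mem_cells {A : Set X} (hA : C.IsSubcomplex A) {i : C.ι}
    (h : (C.openCell i ∩ A).Nonempty) : i ∈ C.cells A :=
  hA.openCell_subset C h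

lemma IsSubcomplex.eq_biUnion {A : Set X} (hA : C.IsSubcomplex A) :
    A = ⋃ j ∈ C.cells A, C.openCell j := by
  apply subset_antisymm
  · intro y hy
    obtain ⟨i, hi⟩ := C.exists_mem_openCell y
    exact Set.mem_iUnion₂.2 ⟨i, hA.mem_cells C ⟨y, hi, hy⟩, hi⟩
  · exact Set.iUnion₂_subset fun j hj => hj

lemma IsSubcomplex.isClosed {A : Set X} (hA : C.IsSubcomplex A) : IsClosed A := by
  rw [C.weakTopology]
  intro i
  classical
  obtain ⟨F, _, hFsub⟩ := C.closureFinite i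
  have key : A ∩ C.closedCell i =
      ⋃ j ∈ (insert i F).filter (fun j => C.openCell j ⊆ A),
        C.closedCell j ∩ C.closedCell i := by
    ext y
    constructor
    · rintro ⟨hyA, hyc⟩
      obtain ⟨j, hj, hyj⟩ := Set.mem_iUnion₂.1 ((hA.eq_biUnion C) ▸ hyA)
      have hjmem : j ∈ insert i F := by
        rcases (C.closedCell_eq i ▸ hyc : y ∈ C.openCell i ∪ C.sphereImage i) with h | h
        · rw [C.eq_of_mem_openCell hyj h]; exact Finset.mem_insert_self _ _
        · obtain ⟨k, hk, hyk⟩ := Set.mem_iUnion₂.1 (hFsub h)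
          rw [C.eq_of_mem_openCell hyj hyk]
          exact Finset.mem_insert_of_mem hk
      exact Set.mem_iUnion₂.2 ⟨j, Finset.mem_filter.2 ⟨hjmem, hj⟩,
        C.openCell_subset_closedCell j hyj, hyc⟩
    · intro hy
      obtain ⟨j, hj, hyj, hyc⟩ := Set.mem_iUnion₂.1 hy
      exact ⟨hA.2 j (Finset.mem_filter.1 hj).2 hyj, hyc⟩
  rw [key]
  exact Set.Finite.isClosed_biUnion (Finset.finite_toSet _)
    (fun j _ => (C.isClosed_closedCell j).inter (C.isClosed_closedCell i))

lemma isSubcomplex_iUnion {ι' : Type*} (A : ι' → Set X) (hA : ∀ k, C.IsSubcomplex (A k)) :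
    C.IsSubcomplex (⋃ k, A k) := by
  constructor
  · refine ⟨⋃ k, C.cells (A k), subset_antisymm ?_ ?_⟩
    · intro y hy
      obtain ⟨k, hk⟩ := Set.mem_iUnion.1 hy
      obtain ⟨i, hi⟩ := C.exists_mem_openCell y
      exact Set.mem_iUnion₂.2 ⟨i, Set.mem_iUnion.2 ⟨k, (hA k).mem_cells C ⟨y, hi, hk⟩⟩, hi⟩
    · refine Set.iUnion₂_subset fun j hj => ?_
      obtain ⟨k, hk⟩ := Set.mem_iUnion.1 hj
      exact hk.trans (Set.subset_iUnion A k)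
  · intro i hi
    obtain ⟨y, hy⟩ := C.openCell_nonempty i
    obtain ⟨k, hk⟩ := Set.mem_iUnion.1 (hi hy)
    exact ((hA k).2 i ((hA k).openCell_subset C ⟨y, hy, hk⟩)).trans (Set.subset_iUnion A k)

lemma cells_iUnion_subset {ι' : Type*} (A : ι' → Set X) (hA : ∀ k, C.IsSubcomplex (A k)) :
    C.cells (⋃ k, A k) ⊆ ⋃ k, C.cells (A k) := by
  intro i hi
  obtain ⟨y, hy⟩ := C.openCell_nonempty i
  obtain ⟨k, hk⟩ := Set.mem_iUnion.1 (hi hy)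
  exact Set.mem_iUnion.2 ⟨k, (hA k).mem_cells C ⟨y, hy, hk⟩⟩

lemma closedCell_subset_connectedComponent {i : C.ι} {x : X}
    (h : (C.closedCell i ∩ connectedComponent x).Nonempty) :
    C.closedCell i ⊆ connectedComponent x := by
  obtain ⟨y, hy, hy'⟩ := h
  rw [connectedComponent_eq hy']
  exact (C.isPreconnected_closedCell i).subset_connectedComponent hy

lemma isSubcomplex_connectedComponent (x : X) : C.IsSubcomplex (connectedComponent x) := by
  constructor
  · refine ⟨C.cells (connectedComponent x), subset_antisymm ?_ ?_⟩
    · intro y hy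
      obtain ⟨i, hi⟩ := C.exists_mem_openCell y
      have : C.openCell i ⊆ connectedComponent x :=
        (C.openCell_subset_closedCell i).trans
          (C.closedCell_subset_connectedComponent ⟨y, C.openCell_subset_closedCell i hi, hy⟩)
      exact Set.mem_iUnion₂.2 ⟨i, this, hi⟩
    · exact Set.iUnion₂_subset fun j hj => hj
  · intro i hi
    obtain ⟨y, hy⟩ := C.openCell_nonempty i
    exact C.closedCell_subset_connectedComponent ⟨y, C.openCell_subset_closedCell i hy, hi hy⟩

include C in
lemma isOpen_connectedComponent' (x : X) : IsOpen (connectedComponent x) := by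
  rw [← isClosed_compl_iff, C.weakTopology]
  intro i
  by_cases h : (C.closedCell i ∩ connectedComponent x).Nonempty
  · have hsub := C.closedCell_subset_connectedComponent h
    have : (connectedComponent x)ᶜ ∩ C.closedCell i = ∅ := by
      ext y
      simp only [Set.mem_inter_iff, Set.mem_compl_iff, Set.mem_empty_iff_false, iff_false]
      rintro ⟨hy1, hy2⟩
      exact hy1 (hsub hy2)
    rw [this]; exact isClosed_empty
  · have : (connectedComponent x)ᶜ ∩ C.closedCell i = C.closedCell i := by
      apply Set.inter_eq_self_of_subset_right
      intro y hy hy'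
      exact h ⟨y, hy, hy'⟩
    rw [this]; exact C.isClosed_closedCell i

end CWStruct

end Aux

/-- For `κ` an uncountable regular cardinal, a CW complex is locally less than `κ` iff
each connected component contains fewer than `κ` many cells. -/
theorem locallyLT_iff_components {X : Type} [TopologicalSpace X] [T2Space X]
    (κ : Cardinal) (hκ : Cardinal.aleph0 < κ) (hreg : κ.IsRegular) (C : CWStruct X) :
    C.LocallyLT κ ↔ ∀ x : X, Cardinal.mk (C.cells (connectedComponent x)) < κ := by
  constructor
  · intro hloc x
    choose A hsub hcard hmem using hloc
    -- each closed cell is covered by the interior of a subcomplex with < κ cells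
    have hcover : ∀ i : C.ι, ∃ T : Finset X, C.closedCell i ⊆ ⋃ y ∈ T, interior (A y) := by
      intro i
      exact (C.isCompact_closedCell i).elim_finite_subcover (fun y => interior (A y))
        (fun y => isOpen_interior) (fun p _ => Set.mem_iUnion.2 ⟨p, hmem p⟩)
    choose T hT using hcover
    set g : C.ι → Set X := fun i => ⋃ y ∈ T i, A y with hg
    have hgeq : ∀ i, g i = ⋃ y : (T i : Set X), A ↑y := by
      intro i
      ext z
      simp only [hg, Set.mem_iUnion, Finset.mem_coe, exists_prop]
      exact ⟨fun ⟨y, hy, hz⟩ => ⟨⟨y, hy⟩, hz⟩, fun ⟨⟨y, hy⟩, hz⟩ => ⟨y, hy, hz⟩⟩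
    have hgsub : ∀ i, C.IsSubcomplex (g i) := by
      intro i
      rw [hgeq]
      exact C.isSubcomplex_iUnion _ (fun k => hsub k)
    have hgcard : ∀ i, Cardinal.mk (C.cells (g i)) < κ := by
      intro i
      have hsubset : C.cells (g i) ⊆ ⋃ y : (T i : Set X), C.cells (A ↑y) := by
        rw [hgeq]
        exact C.cells_iUnion_subset (fun y : (T i : Set X) => A ↑y) (fun k => hsub k)
      refine lt_of_le_of_lt (Cardinal.mk_le_mk_of_subset hsubset) ?_
      exact (Cardinal.card_iUnion_lt_iff_forall_of_isRegular hreg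
        (lt_trans (Cardinal.lt_aleph0_of_finite _) hκ)).2 (fun y => hcard y)
    have hgint : ∀ i, C.closedCell i ⊆ interior (g i) := by
      intro i
      refine (hT i).trans ?_
      refine Set.iUnion₂_subset fun y hy => ?_
      exact interior_mono (fun z hz => Set.mem_iUnion₂.2 ⟨y, hy, hz⟩)
    -- the increasing chain of cell sets
    let S : ℕ → Set C.ι := fun n =>
      Nat.rec (C.cells (A x)) (fun _ Sn => ⋃ i ∈ Sn, C.cells (g i)) n
    have hS0 : S 0 = C.cells (A x) := rfl
    have hSsucc : ∀ n, S (n + 1) = ⋃ i ∈ S n, C.cells (g i) := fun n => rfl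
    have hScard : ∀ n, Cardinal.mk ↥(S n) < κ := by
      intro n
      induction n with
      | zero => exact hcard x
      | succ n ih =>
        rw [hSsucc]
        rw [Cardinal.card_biUnion_lt_iff_forall_of_isRegular hreg ih]
        exact fun i _ => hgcard i
    set Stot : Set C.ι := ⋃ n, S n with hStot
    have hStotcard : Cardinal.mk ↥Stot < κ :=
      (Cardinal.card_iUnion_lt_iff_forall_of_isRegular hreg
        (by rw [Cardinal.mk_nat]; exact hκ)).2 hScard
    set B : Set X := ⋃ j ∈ Stot, C.openCell j with hB
    -- g i ⊆ B for i ∈ Stot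
    have hgB : ∀ i ∈ Stot, g i ⊆ B := by
      intro i hi
      obtain ⟨n, hn⟩ := Set.mem_iUnion.1 hi
      rw [(hgsub i).eq_biUnion C]
      refine Set.iUnion₂_subset fun j hj => ?_
      have hjS : j ∈ S (n + 1) := by
        rw [hSsucc]
        exact Set.mem_iUnion₂.2 ⟨i, hn, hj⟩
      exact fun z hz => Set.mem_iUnion₂.2 ⟨j, Set.mem_iUnion.2 ⟨n + 1, hjS⟩, hz⟩
    have hmemStot : ∀ i, C.openCell i ⊆ B → i ∈ Stot := by
      intro i hi
      obtain ⟨y, hy⟩ := C.openCell_nonempty i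
      obtain ⟨j, hj, hyj⟩ := Set.mem_iUnion₂.1 (hi hy)
      rwa [C.eq_of_mem_openCell hy hyj]
    have hBsub : C.IsSubcomplex B := by
      constructor
      · exact ⟨Stot, rfl⟩
      · intro i hi
        have hiS := hmemStot i hi
        exact ((hgint i).trans interior_subset).trans (hgB i hiS)
    have hBopen : IsOpen B := by
      rw [← subset_interior_iff_isOpen]
      intro y hy
      obtain ⟨j, hj, hyj⟩ := Set.mem_iUnion₂.1 hy
      have hy2 : y ∈ interior (g j) := hgint j (C.openCell_subset_closedCell j hyj)
      exact interior_mono (hgB j hj) hy2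
    have hxB : x ∈ B := by
      have hx1 : x ∈ A x := interior_subset (hmem x)
      rw [(hsub x).eq_biUnion C] at hx1
      obtain ⟨j, hj, hxj⟩ := Set.mem_iUnion₂.1 hx1
      exact Set.mem_iUnion₂.2 ⟨j, Set.mem_iUnion.2 ⟨0, hj⟩, hxj⟩
    have hcomp : connectedComponent x ⊆ B :=
      IsClopen.connectedComponent_subset ⟨hBsub.isClosed C, hBopen⟩ hxB
    have hcells : C.cells (connectedComponent x) ⊆ Stot := fun i hi =>
      hmemStot i (Set.Subset.trans hi hcomp)
    exact lt_of_le_of_lt (Cardinal.mk_le_mk_of_subset hcells) hStotcard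
  · intro h x
    refine ⟨connectedComponent x, C.isSubcomplex_connectedComponent x, h x, ?_⟩
    rw [(C.isOpen_connectedComponent' x).interior_eq]
    exact mem_connectedComponent
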